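/- Let n > 3 be an integer and b̃ ∈ ℝ be such that T̃ₙ(2, b̃) is invertible. Then for every row index 1 ≤ i ≤ n, the i-th row sum of T̃ₙ(2, b̃)⁻¹ (the sum over j = 1,…,n of its (i,j)-entries) satisfies n/(2(b̃−1)) ≤ rowsumᵢ ≤ (n+1)²/8 − n(b̃−2)/(2(b̃−1)). -/

import Mathlib

open Matrix BigOperators Finset

/-- The symmetric tridiagonal near-Toeplitz matrix with corner diagonal entries `bt`,
interior diagonal entries `b`, and off-diagonal entries `-1` (0-based indices). -/
noncomputable def Ttilde (n : ℕ) (b bt : ℝ) : Matrix (Fin n) (Fin n) ℝ :=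
  Matrix.of fun i j =>
    if (i : ℕ) = (j : ℕ) then (if (i : ℕ) = 0 ∨ (i : ℕ) = n - 1 then bt else b)
    else if (i : ℕ) + 1 = (j : ℕ) ∨ (j : ℕ) + 1 = (i : ℕ) then (-1 : ℝ) else 0

lemma Ttilde_mulVec (n : ℕ) (hn : 3 < n) (b bt : ℝ) (g : Fin n → ℝ) (i : Fin n) :
    (Ttilde n b bt *ᵥ g) i =
      if (i : ℕ) = 0 then bt * g ⟨0, by omega⟩ - g ⟨1, by omega⟩
      else if (i : ℕ) = n - 1 then bt * g ⟨n-1, by omega⟩ - g ⟨n-2, by omega⟩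
      else - g ⟨(i:ℕ)-1, by omega⟩ + b * g i
             - g ⟨((i:ℕ)+1) % n, Nat.mod_lt _ (by omega)⟩ := by
  have hi := i.isLt
  rw [Matrix.mulVec, dotProduct]
  split_ifs with h0 hl
  · have hsub : ∑ j : Fin n, Ttilde n b bt i j * g j
        = ∑ j ∈ ({⟨0, by omega⟩, ⟨1, by omega⟩} : Finset (Fin n)), Ttilde n b bt i j * g j := by
      refine (Finset.sum_subset (Finset.subset_univ _) ?_).symm
      intro j _ hj
      simp only [Finset.mem_insert, Finset.mem_singleton, Fin.ext_iff, Fin.val_mk, not_or] at hj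
      simp only [Ttilde, Matrix.of_apply]
      split_ifs <;> first | ring1 | omega | (exfalso; omega) | simp_all
    rw [hsub, Finset.sum_pair (by simp [Fin.ext_iff])]
    simp only [Ttilde, Matrix.of_apply, Fin.val_mk]
    split_ifs <;> first | ring1 | omega | (exfalso; omega) | simp_all
  · have hsub : ∑ j : Fin n, Ttilde n b bt i j * g j
        = ∑ j ∈ ({⟨n-1, by omega⟩, ⟨n-2, by omega⟩} : Finset (Fin n)), Ttilde n b bt i j * g j := by
      refine (Finset.sum_subset (Finset.subset_univ _) ?_).symm
      intro j _ hj
      simp only [Finset.mem_insert, Finset.mem_singleton, Fin.ext_iff, Fin.val_mk, not_or] at hj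
      simp only [Ttilde, Matrix.of_apply]
      split_ifs <;> first | ring1 | omega | (exfalso; omega) | simp_all
    rw [hsub, Finset.sum_pair (by simp only [ne_eq, Fin.ext_iff, Fin.val_mk]; omega)]
    simp only [Ttilde, Matrix.of_apply, Fin.val_mk]
    split_ifs <;> first | ring1 | omega | (exfalso; omega) | simp_all
  · have hsub : ∑ j : Fin n, Ttilde n b bt i j * g j
        = ∑ j ∈ ({⟨(i:ℕ)-1, by omega⟩, i, ⟨((i:ℕ)+1) % n, Nat.mod_lt _ (by omega)⟩} : Finset (Fin n)),
            Ttilde n b bt i j * g j := by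
      refine (Finset.sum_subset (Finset.subset_univ _) ?_).symm
      intro j _ hj
      simp only [Finset.mem_insert, Finset.mem_singleton, Fin.ext_iff, Fin.val_mk, not_or] at hj
      simp only [Ttilde, Matrix.of_apply]
      have hmod : ((i:ℕ)+1) % n = (i:ℕ)+1 := Nat.mod_eq_of_lt (by omega)
      rw [hmod] at hj
      split_ifs <;> first | ring1 | omega | (exfalso; omega) | simp_all
    have hmod : ((i:ℕ)+1) % n = (i:ℕ)+1 := Nat.mod_eq_of_lt (by omega)
    rw [hsub, Finset.sum_insert (by simp only [Finset.mem_insert, Finset.mem_singleton,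
        Fin.ext_iff, Fin.val_mk, not_or]; omega),
      Finset.sum_pair (by simp only [ne_eq, Fin.ext_iff, Fin.val_mk]; omega)]
    simp only [Ttilde, Matrix.of_apply, Fin.val_mk, hmod]
    split_ifs <;> first | ring1 | omega | (exfalso; omega) | simp_all

/-- The maximum absolute row sum (operator norm induced by the sup norm). -/
noncomputable def normInf {n : ℕ} (A : Matrix (Fin n) (Fin n) ℝ) : ℝ :=
  ⨆ i : Fin n, ∑ j : Fin n, |A i j|

theorem stmt6 (n : ℕ) (hn : 3 < n) (bt : ℝ) (hinv : IsUnit (Ttilde n 2 bt)) :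
    ∀ i : Fin n,
      (n : ℝ) / (2 * (bt - 1)) ≤ ∑ j : Fin n, (Ttilde n 2 bt)⁻¹ i j ∧
      ∑ j : Fin n, (Ttilde n 2 bt)⁻¹ i j ≤
        ((n : ℝ) + 1) ^ 2 / 8 - (n : ℝ) * (bt - 2) / (2 * (bt - 1)) := by
  have hdet : IsUnit (Ttilde n 2 bt).det := (Matrix.isUnit_iff_isUnit_det _).mp hinv
  -- bt ≠ 1
  have hbt : bt ≠ 1 := by
    intro h
    have hone : Ttilde n 2 bt *ᵥ (fun _ => (1:ℝ)) = 0 := by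
      funext i
      rw [Ttilde_mulVec n hn 2 bt _ i]
      show _ = (0:ℝ)
      split_ifs <;> norm_num [h]
    have hz : (fun _ => (1:ℝ)) = (0 : Fin n → ℝ) := by
      have h2 := congrArg (fun v => (Ttilde n 2 bt)⁻¹ *ᵥ v) hone
      simpa [Matrix.mulVec_mulVec, Matrix.nonsing_inv_mul _ hdet] using h2
    exact one_ne_zero (congrFun hz ⟨0, by omega⟩)
  have hbt' : bt - 1 ≠ 0 := sub_ne_zero.mpr hbt
  have hN : (4:ℝ) ≤ (n:ℝ) := by exact_mod_cast hn
  set N : ℝ := (n:ℝ) with hNdef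
  set x : Fin n → ℝ :=
    fun j => N/(2*(bt-1)) + ((N-1)^2 - (2*((j:ℕ):ℝ)+1-N)^2)/8 with hx
  have hAx : Ttilde n 2 bt *ᵥ x = fun _ => (1:ℝ) := by
    funext i
    have hi := i.isLt
    rw [Ttilde_mulVec n hn 2 bt x i]
    split_ifs with h0 hl
    · simp only [hx, Fin.val_mk]
      push_cast
      field_simp
      ring
    · have e1 : (((n-1 : ℕ)) : ℝ) = N - 1 := by rw [Nat.cast_sub (by omega)]; norm_num [hNdef]
      have e2 : (((n-2 : ℕ)) : ℝ) = N - 2 := by rw [Nat.cast_sub (by omega)]; norm_num [hNdef]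
      simp only [hx, Fin.val_mk, e1, e2]
      field_simp
      ring
    · have hmod : ((i:ℕ)+1) % n = (i:ℕ)+1 := Nat.mod_eq_of_lt (by omega)
      have e1 : ((((i:ℕ)-1 : ℕ)) : ℝ) = ((i:ℕ):ℝ) - 1 := by
        rw [Nat.cast_sub (by omega)]; norm_num
      have e2 : (((((i:ℕ)+1) % n : ℕ)) : ℝ) = ((i:ℕ):ℝ) + 1 := by rw [hmod]; push_cast; ring
      simp only [hx, Fin.val_mk, e1, e2]
      field_simp
      ring
  have hrow : ∀ i : Fin n, ∑ j : Fin n, (Ttilde n 2 bt)⁻¹ i j = x i := by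
    intro i
    have hinvx : (Ttilde n 2 bt)⁻¹ *ᵥ (fun _ => (1:ℝ)) = x := by
      rw [← hAx, Matrix.mulVec_mulVec, Matrix.nonsing_inv_mul _ hdet, Matrix.one_mulVec]
    calc ∑ j : Fin n, (Ttilde n 2 bt)⁻¹ i j
        = ((Ttilde n 2 bt)⁻¹ *ᵥ (fun _ => (1:ℝ))) i := by
          simp [Matrix.mulVec, dotProduct]
      _ = x i := congrFun hinvx i
  intro i
  rw [hrow i]
  have ht0 : (0:ℝ) ≤ ((i:ℕ):ℝ) := by positivity
  have ht1 : ((i:ℕ):ℝ) ≤ N - 1 := by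
    have := i.isLt
    have : ((i:ℕ):ℝ) ≤ (n:ℝ) - 1 := by
      have h' : (i:ℕ) ≤ n - 1 := by omega
      calc ((i:ℕ):ℝ) ≤ ((n-1:ℕ):ℝ) := by exact_mod_cast h'
        _ = (n:ℝ) - 1 := by rw [Nat.cast_sub (by omega)]; norm_num
    exact this
  have key : N/(2*(bt-1)) + N*(bt-2)/(2*(bt-1)) = N/2 := by field_simp; ring
  constructor
  · simp only [hx]
    nlinarith [mul_nonneg ht0 (sub_nonneg.mpr ht1)]
  · simp only [hx]
    nlinarith [sq_nonneg (2*((i:ℕ):ℝ)+1-N), key]
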